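/- Let A : L²(M) → Y be compact with Σ_n σ_n^η ‖v_n‖²_{L^∞(M)} < ∞ for some η > 0, and suppose c_n ≤ C σ_n^{-β} for all n (C, β > 0). If y ∈ V_{2η+2β}, then there is C' > 0 with ‖A†y − T^c_α y‖_{L^∞(M)} ≤ C' α^{min{1, η/4}} for all α > 0. -/

import Mathlib

open MeasureTheory
open scoped RealInnerProductSpace ENNReal

lemma stmt15_frac {t x s : ℝ} (ht0 : 0 ≤ t) (ht1 : t ≤ 1) (hx : 0 < x) (hs : 0 < s) :
    x / (x + s) ≤ (x / s) ^ t := by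
  rcases le_total s x with h | h
  · have h1 : x / (x + s) ≤ 1 := by
      rw [div_le_one (by positivity)]; linarith
    have h2 : (1:ℝ) ≤ x / s := (one_le_div hs).mpr h
    calc x / (x + s) ≤ 1 := h1
      _ = (x/s) ^ (0:ℝ) := (Real.rpow_zero _).symm
      _ ≤ (x/s) ^ t := Real.rpow_le_rpow_of_exponent_le h2 ht0
  · have hb : x / s ≤ 1 := (div_le_one hs).mpr h
    have h2 : (x/s) ^ (1:ℝ) ≤ (x/s) ^ t :=
      Real.rpow_le_rpow_of_exponent_ge (by positivity) hb ht1
    rw [Real.rpow_one] at h2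
    calc x / (x + s) ≤ x / s := by gcongr; linarith
      _ ≤ (x/s) ^ t := h2

lemma stmt15_core (σ a K c : ℕ → ℝ) (hσpos : ∀ n, 0 < σ n) (hσb : ∀ n, σ n ≤ σ 0)
    (hK0 : ∀ n, 0 ≤ K n)
    (η β C t : ℝ) (hη : 0 < η) (hβ : 0 < β) (hC : 0 < C) (ht : t = min 1 (η/4))
    (hcpos : ∀ n, 0 < c n) (hcβ : ∀ n, c n ≤ C * σ n ^ (-β))
    (hgrowth : Summable fun n => σ n ^ η * K n ^ 2)
    (hy : Summable fun n => |a n| ^ 2 / σ n ^ (2 + 2 * η + 2 * β)) :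
    ∃ S : ℝ, 0 ≤ S ∧ ∀ α : ℝ, 0 < α → ∀ w : ℕ → ℝ, (∀ n, |w n| ≤ K n) →
      Summable (fun n => (σ n)⁻¹ * a n * w n) ∧
      Summable (fun n => (σ n / ((σ n) ^ 2 + α * c n)) * a n * w n) ∧
      |(∑' n, (σ n)⁻¹ * a n * w n) - ∑' n, (σ n / ((σ n) ^ 2 + α * c n)) * a n * w n|
        ≤ S * α ^ t := by
  have ht0 : 0 < t := by rw [ht]; exact lt_min one_pos (by positivity)
  have ht1 : t ≤ 1 := by rw [ht]; exact min_le_left _ _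
  have ht4 : 4 * t ≤ η := by
    have := min_le_right 1 (η/4); rw [ht]; nlinarith [min_le_right 1 (η/4)]
  set e : ℝ := η + β - 2*t - β*t with hedef
  have h2e : η ≤ 2*e := by rw [hedef]; nlinarith
  set f : ℕ → ℝ := fun n => |a n| * σ n ^ (-(1+η+β)) with hfdef
  set g : ℕ → ℝ := fun n => σ n ^ e * K n with hgdef
  have hfnn : ∀ n, 0 ≤ f n := fun n => by
    have := hσpos n; simp only [hfdef]; positivity
  have hgnn : ∀ n, 0 ≤ g n := fun n => by
    have := hK0 n; have := hσpos n; simp only [hgdef]; positivity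
  set Mb : ℝ := max 1 (σ 0) with hMbdef
  have hMb1 : (1:ℝ) ≤ Mb := le_max_left _ _
  have hσMb : ∀ n, σ n ≤ Mb := fun n => (hσb n).trans (le_max_right _ _)
  -- summability of f^2
  have hf2 : Summable fun n => f n ^ 2 := by
    have heq : ∀ n, f n ^ 2 = |a n| ^ 2 / σ n ^ (2 + 2*η + 2*β) := by
      intro n
      have hσ := hσpos n
      simp only [hfdef]
      rw [mul_pow, sq (σ n ^ (-(1+η+β))), ← Real.rpow_add hσ, div_eq_mul_inv,
        ← Real.rpow_neg hσ.le]
      congr 2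
      ring
    exact (funext heq : (fun n => f n ^ 2) = _) ▸ hy
  -- summability of g^2
  have hg2 : Summable fun n => g n ^ 2 := by
    apply Summable.of_nonneg_of_le (fun n => sq_nonneg _) ?_
      (hgrowth.mul_left (Mb ^ (2*e - η)))
    intro n
    have hσ := hσpos n
    have heq : g n ^ 2 = σ n ^ (2*e - η) * (σ n ^ η * K n ^ 2) := by
      simp only [hgdef]
      rw [mul_pow, sq (σ n ^ e), ← Real.rpow_add hσ, ← mul_assoc, ← Real.rpow_add hσ]
      congr 2
      ring
    rw [heq]
    have h1 : σ n ^ (2*e - η) ≤ Mb ^ (2*e - η) :=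
      Real.rpow_le_rpow hσ.le (hσMb n) (by linarith)
    have h2 : 0 ≤ σ n ^ η * K n ^ 2 := by positivity
    nlinarith [Real.rpow_nonneg hσ.le (2*e-η)]
  -- summability of f*g
  have hfg : Summable fun n => f n * g n := by
    apply Summable.of_nonneg_of_le (fun n => mul_nonneg (hfnn n) (hgnn n)) ?_
      ((hf2.add hg2).mul_left (1/2))
    intro n
    nlinarith [two_mul_le_add_sq (f n) (g n)]
  set S0 : ℝ := ∑' n, f n * g n with hS0def
  have hS0 : 0 ≤ S0 := tsum_nonneg fun n => mul_nonneg (hfnn n) (hgnn n)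
  have hCt : 0 < C ^ t := Real.rpow_pos_of_pos hC t
  refine ⟨C ^ t * S0, by positivity, ?_⟩
  intro α hα w hw
  -- key identity
  have hfg_eq : ∀ n, f n * g n = σ n ^ (-(1+2*t+β*t)) * (|a n| * K n) := by
    intro n
    simp only [hfdef, hgdef]
    rw [show (-(1+2*t+β*t) : ℝ) = -(1+η+β) + e by rw [hedef]; ring,
      Real.rpow_add (hσpos n)]
    ring
  have hwnn : ∀ n, 0 ≤ K n := hK0
  -- bound for first series
  have hb1 : ∀ n, |(σ n)⁻¹ * a n * w n| ≤ Mb ^ (2*t+β*t) * (f n * g n) := by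
    intro n
    have hσ := hσpos n
    have habs : |(σ n)⁻¹ * a n * w n| = (σ n)⁻¹ * (|a n| * |w n|) := by
      rw [abs_mul, abs_mul, abs_inv, abs_of_pos hσ]; ring
    have hstep1 : (σ n)⁻¹ * (|a n| * |w n|) ≤ (σ n)⁻¹ * (|a n| * K n) := by
      have := hw n
      have h0 : 0 ≤ |a n| := abs_nonneg _
      have hinv : 0 ≤ (σ n)⁻¹ := by positivity
      exact mul_le_mul_of_nonneg_left (mul_le_mul_of_nonneg_left (hw n) h0) hinv
    have hsplit : (σ n)⁻¹ = σ n ^ (2*t+β*t) * σ n ^ (-(1+2*t+β*t)) := by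
      rw [← Real.rpow_add hσ, show 2*t+β*t + -(1+2*t+β*t) = (-1:ℝ) by ring,
        Real.rpow_neg_one]
    have hstep2 : (σ n)⁻¹ * (|a n| * K n) = σ n ^ (2*t+β*t) * (f n * g n) := by
      rw [hfg_eq n, hsplit]; ring
    have hstep3 : σ n ^ (2*t+β*t) * (f n * g n) ≤ Mb ^ (2*t+β*t) * (f n * g n) := by
      have hle : σ n ^ (2*t+β*t) ≤ Mb ^ (2*t+β*t) :=
        Real.rpow_le_rpow hσ.le (hσMb n) (by positivity)
      exact mul_le_mul_of_nonneg_right hle (mul_nonneg (hfnn n) (hgnn n))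
    rw [habs]
    calc (σ n)⁻¹ * (|a n| * |w n|) ≤ (σ n)⁻¹ * (|a n| * K n) := hstep1
      _ = σ n ^ (2*t+β*t) * (f n * g n) := hstep2
      _ ≤ Mb ^ (2*t+β*t) * (f n * g n) := hstep3
  have hfgM : Summable fun n => Mb ^ (2*t+β*t) * (f n * g n) := hfg.mul_left _
  have h1 : Summable fun n => (σ n)⁻¹ * a n * w n :=
    Summable.of_norm_bounded hfgM fun n => by
      rw [Real.norm_eq_abs]; exact hb1 n
  -- coefficient comparison for second series
  have hden : ∀ n, 0 < (σ n) ^ 2 + α * c n := by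
    intro n; have := hσpos n; have := hcpos n; positivity
  have hcoef_nn : ∀ n, 0 ≤ σ n / ((σ n) ^ 2 + α * c n) := by
    intro n; have := hσpos n; have := hden n; positivity
  have hcoef : ∀ n, σ n / ((σ n) ^ 2 + α * c n) ≤ (σ n)⁻¹ := by
    intro n
    have hσ := hσpos n
    have h1' : σ n / ((σ n) ^ 2 + α * c n) ≤ σ n / (σ n) ^ 2 := by
      gcongr
      nlinarith [hcpos n]
    have h2' : σ n / (σ n) ^ 2 = (σ n)⁻¹ := by
      rw [sq, ← div_div, div_self hσ.ne', one_div]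
    linarith [h1', h2'.le, h2'.ge]
  have hb2 : ∀ n, |σ n / ((σ n) ^ 2 + α * c n) * a n * w n| ≤ Mb ^ (2*t+β*t) * (f n * g n) := by
    intro n
    refine le_trans ?_ (hb1 n)
    rw [abs_mul, abs_mul, abs_mul, abs_mul, abs_inv, abs_of_pos (hσpos n),
      abs_of_nonneg (hcoef_nn n)]
    have := hcoef n
    have h0 : 0 ≤ |a n| * |w n| := by positivity
    calc σ n / ((σ n) ^ 2 + α * c n) * |a n| * |w n|
        = σ n / ((σ n) ^ 2 + α * c n) * (|a n| * |w n|) := by ring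
      _ ≤ (σ n)⁻¹ * (|a n| * |w n|) := mul_le_mul_of_nonneg_right this h0
      _ = (σ n)⁻¹ * |a n| * |w n| := by ring
  have h2 : Summable fun n => σ n / ((σ n) ^ 2 + α * c n) * a n * w n :=
    Summable.of_norm_bounded hfgM fun n => by
      rw [Real.norm_eq_abs]; exact hb2 n
  refine ⟨h1, h2, ?_⟩
  rw [← Summable.tsum_sub h1 h2]
  have hαt : 0 < α ^ t := Real.rpow_pos_of_pos hα t
  have key : ∀ n, ‖(σ n)⁻¹ * a n * w n - σ n / ((σ n) ^ 2 + α * c n) * a n * w n‖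
      ≤ (C ^ t * α ^ t) * (f n * g n) := by
    intro n
    have hσ := hσpos n
    have hcp := hcpos n
    set d : ℝ := (σ n)⁻¹ - σ n / ((σ n) ^ 2 + α * c n) with hddef
    have hd0 : 0 ≤ d := by rw [hddef]; linarith [hcoef n]
    have hterm : (σ n)⁻¹ * a n * w n - σ n / ((σ n) ^ 2 + α * c n) * a n * w n
        = d * (a n * w n) := by rw [hddef]; ring
    -- bound d
    have hd : d ≤ α ^ t * C ^ t * σ n ^ (-(1+2*t+β*t)) := by
      have hx : 0 < α * c n := by positivity
      have hs : 0 < (σ n) ^ 2 := by positivity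
      have hdval : d = (σ n)⁻¹ * (α * c n / (α * c n + (σ n) ^ 2)) := by
        rw [hddef]
        field_simp
        ring
      have hfrac : α * c n / (α * c n + (σ n) ^ 2) ≤ (α * c n / (σ n) ^ 2) ^ t :=
        stmt15_frac ht0.le ht1 hx hs
      have hquot : α * c n / (σ n) ^ 2 ≤ α * C * σ n ^ (-β-2) := by
        have h1' : α * c n / (σ n) ^ 2 ≤ α * (C * σ n ^ (-β)) / (σ n) ^ 2 := by
          gcongr
          exact hcβ n
        have h2' : α * (C * σ n ^ (-β)) / (σ n) ^ 2 = α * C * σ n ^ (-β-2) := by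
          rw [show ((σ n) ^ 2 : ℝ) = σ n ^ (2:ℝ) by
              rw [← Real.rpow_natCast (σ n) 2]; norm_num,
            div_eq_mul_inv, ← Real.rpow_neg hσ.le, mul_assoc, mul_assoc,
            ← Real.rpow_add hσ]
          ring_nf
        linarith
      have hmono : (α * c n / (σ n) ^ 2) ^ t ≤ (α * C * σ n ^ (-β-2)) ^ t := by
        apply Real.rpow_le_rpow (by positivity) hquot ht0.le
      have hexpand : (α * C * σ n ^ (-β-2)) ^ t = α ^ t * C ^ t * σ n ^ ((-β-2)*t) := by
        rw [Real.mul_rpow (by positivity) (Real.rpow_nonneg hσ.le _),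
          Real.mul_rpow hα.le hC.le, Real.rpow_mul hσ.le]
      have hfinal : (σ n)⁻¹ * (α ^ t * C ^ t * σ n ^ ((-β-2)*t))
          = α ^ t * C ^ t * σ n ^ (-(1+2*t+β*t)) := by
        rw [show (σ n)⁻¹ = σ n ^ (-1:ℝ) by rw [Real.rpow_neg_one],
          show (-(1+2*t+β*t) : ℝ) = -1 + (-β-2)*t by ring,
          Real.rpow_add hσ]
        ring
      have hinv : 0 ≤ (σ n)⁻¹ := by positivity
      calc d = (σ n)⁻¹ * (α * c n / (α * c n + (σ n) ^ 2)) := hdval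
        _ ≤ (σ n)⁻¹ * (α * c n / (σ n) ^ 2) ^ t :=
            mul_le_mul_of_nonneg_left hfrac hinv
        _ ≤ (σ n)⁻¹ * (α * C * σ n ^ (-β-2)) ^ t :=
            mul_le_mul_of_nonneg_left hmono hinv
        _ = (σ n)⁻¹ * (α ^ t * C ^ t * σ n ^ ((-β-2)*t)) := by rw [hexpand]
        _ = α ^ t * C ^ t * σ n ^ (-(1+2*t+β*t)) := hfinal
    rw [hterm, Real.norm_eq_abs, abs_mul, abs_of_nonneg hd0, abs_mul]
    have hwb : |a n| * |w n| ≤ |a n| * K n :=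
      mul_le_mul_of_nonneg_left (hw n) (abs_nonneg _)
    calc d * (|a n| * |w n|) ≤ d * (|a n| * K n) :=
        mul_le_mul_of_nonneg_left hwb hd0
      _ ≤ (α ^ t * C ^ t * σ n ^ (-(1+2*t+β*t))) * (|a n| * K n) := by
          exact mul_le_mul_of_nonneg_right hd (mul_nonneg (abs_nonneg _) (hK0 n))
      _ = (C ^ t * α ^ t) * (f n * g n) := by rw [hfg_eq n]; ring
  have := tsum_of_norm_bounded ((hfg.hasSum).mul_left (C ^ t * α ^ t)) key
  calc ‖∑' n, ((σ n)⁻¹ * a n * w n - σ n / ((σ n) ^ 2 + α * c n) * a n * w n)‖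
      ≤ (C ^ t * α ^ t) * S0 := this
    _ = (C ^ t * S0) * α ^ t := by ring


/-- if `Σ_n σ_n^η ‖v_n‖²_{L^∞(M)} < ∞` for some `η > 0`,
`c_n ≤ C σ_n^{-β}` (`C, β > 0`), and `y ∈ V_{2η+2β}`, then there is `C' > 0` with
`‖A†y − T^c_α y‖_{L^∞(M)} ≤ C' α^{min{1, η/4}}` for all `α > 0`. -/
theorem stmt15
    {M : Type*} [MeasureSpace M]
    {Y : Type*} [NormedAddCommGroup Y] [InnerProductSpace ℝ Y] [CompleteSpace Y]
    (u : ℕ → Y) (hu : Orthonormal ℝ u)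
    (v : ℕ → M → ℝ)
    (hv2 : ∀ n, MemLp (v n) 2 volume) (hvinf : ∀ n, MemLp (v n) ⊤ volume)
    (hvON : ∀ n m, ∫ x, v n x * v m x = if n = m then (1 : ℝ) else 0)
    (σ : ℕ → ℝ) (hσpos : ∀ n, 0 < σ n) (hσanti : Antitone σ)
    (hσ0 : Filter.Tendsto σ Filter.atTop (nhds 0))
    (η : ℝ) (hη : 0 < η)
    (hgrowth : Summable (fun n => σ n ^ η * (eLpNorm (v n) ⊤ volume).toReal ^ 2))
    (c : ℕ → ℝ) (c₀ : ℝ) (hc₀ : 0 < c₀) (hc : ∀ n, c₀ ≤ c n)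
    (C β : ℝ) (hC : 0 < C) (hβ : 0 < β)
    (hcβ : ∀ n, c n ≤ C * σ n ^ (-β))
    (y : Y)
    (hy : Summable (fun n => |⟪y, u n⟫| ^ 2 / σ n ^ (2 + 2 * η + 2 * β))) :
    ∃ C' : ℝ, 0 < C' ∧ ∀ α : ℝ, 0 < α →
      eLpNorm
        (fun x =>
          (∑' n, (σ n)⁻¹ * ⟪y, u n⟫ * v n x) -
            ∑' n, (σ n / ((σ n) ^ 2 + α * c n)) * ⟪y, u n⟫ * v n x) ⊤ volume ≤
        ENNReal.ofReal (C' * α ^ (min 1 (η / 4))) := by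
  set K : ℕ → ℝ := fun n => (eLpNorm (v n) ⊤ volume).toReal with hKdef
  have hK0 : ∀ n, 0 ≤ K n := fun n => ENNReal.toReal_nonneg
  obtain ⟨S, hS0, hS⟩ := stmt15_core σ (fun n => ⟪y, u n⟫) K c hσpos
    (fun n => hσanti (Nat.zero_le n)) hK0 η β C (min 1 (η/4)) hη hβ hC rfl
    (fun n => hc₀.trans_le (hc n)) hcβ hgrowth hy
  refine ⟨S + 1, by positivity, ?_⟩
  intro α hα
  have hvK : ∀ n, ∀ᵐ x : M, |v n x| ≤ K n := by
    intro n
    have hlt : eLpNorm (v n) ⊤ volume < ⊤ := (hvinf n).2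
    rw [eLpNorm_exponent_top] at hlt
    filter_upwards [ae_le_eLpNormEssSup (f := v n) (μ := volume)] with x hx
    have h := ENNReal.toReal_mono hlt.ne hx
    simpa [hKdef, eLpNorm_exponent_top, Real.norm_eq_abs] using h
  have hae : ∀ᵐ x : M, ∀ n, |v n x| ≤ K n := ae_all_iff.mpr hvK
  have hαt : 0 < α ^ (min 1 (η/4)) := Real.rpow_pos_of_pos hα _
  have hbound : ∀ᵐ x : M, ‖(∑' n, (σ n)⁻¹ * ⟪y, u n⟫ * v n x) -
      ∑' n, (σ n / ((σ n) ^ 2 + α * c n)) * ⟪y, u n⟫ * v n x‖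
        ≤ (S + 1) * α ^ (min 1 (η/4)) := by
    filter_upwards [hae] with x hx
    obtain ⟨h1, h2, h3⟩ := hS α hα (fun n => v n x) hx
    rw [Real.norm_eq_abs]
    calc |(∑' n, (σ n)⁻¹ * ⟪y, u n⟫ * v n x) -
        ∑' n, (σ n / ((σ n) ^ 2 + α * c n)) * ⟪y, u n⟫ * v n x|
        ≤ S * α ^ (min 1 (η/4)) := h3
      _ ≤ (S + 1) * α ^ (min 1 (η/4)) := by nlinarith
  have hfin := eLpNorm_le_of_ae_bound (p := (⊤ : ℝ≥0∞)) (μ := (volume : Measure M)) hbound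
  simpa using hfin
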